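/- For any twice differentiable f: ℝ → ℝ and constants a, b, h, the function Φ(λ,φ) = f(cos φ·(a sin λ + b cos λ) + h sin φ) solves the spherical master equation ∂²Φ/∂λ∂φ·((∂Φ/∂φ)² − (1/cos²φ)(∂Φ/∂λ)²) + ((1/cos²φ)∂²Φ/∂λ² − ∂²Φ/∂φ²)·(∂Φ/∂λ)(∂Φ/∂φ) − (sin φ/cos³φ)·(∂Φ/∂λ)³ = 0 at every point where cos φ ≠ 0. -/

import Mathlib

open Real

noncomputable def pdx (g : ℝ → ℝ → ℝ) (a b : ℝ) : ℝ := deriv (fun s => g s b) a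
noncomputable def pdy (g : ℝ → ℝ → ℝ) (a b : ℝ) : ℝ := deriv (fun s => g a s) b

/-- Every potential of the form `Φ(λ,φ) = f(cos φ (a sin λ + b cos λ) + h sin φ)`
solves the spherical master equation at every point where `cos φ ≠ 0`. -/
theorem spherical_master_equation_solution
    (f : ℝ → ℝ) (hf : ContDiff ℝ 2 f) (a b h : ℝ)
    (Φ : ℝ → ℝ → ℝ)
    (hΦ : ∀ l p : ℝ, Φ l p =
      f (Real.cos p * (a * Real.sin l + b * Real.cos l) + h * Real.sin p)) :
    ∀ l p : ℝ, Real.cos p ≠ 0 →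
      pdx (fun x y => pdy Φ x y) l p *
          ((pdy Φ l p) ^ 2 - (1 / Real.cos p ^ 2) * (pdx Φ l p) ^ 2)
        + ((1 / Real.cos p ^ 2) * pdx (fun x y => pdx Φ x y) l p
            - pdy (fun x y => pdy Φ x y) l p) * (pdx Φ l p) * (pdy Φ l p)
        - (Real.sin p / Real.cos p ^ 3) * (pdx Φ l p) ^ 3 = 0 := by
  intro l p hc
  set u : ℝ → ℝ → ℝ := fun x y => Real.cos y * (a * Real.sin x + b * Real.cos x) + h * Real.sin y with hu
  have hf1 : Differentiable ℝ f := hf.differentiable (by norm_num)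
  have hf2 : Differentiable ℝ (deriv f) := by
    have h2 : ContDiff ℝ ((1 : ℕ) + 1) f := by exact_mod_cast hf
    exact ((contDiff_succ_iff_deriv.mp h2).2.2).differentiable (by norm_num)
  have hux : ∀ x y : ℝ, HasDerivAt (fun s => u s y)
      (Real.cos y * (a * Real.cos x - b * Real.sin x)) x := by
    intro x y
    have := ((((Real.hasDerivAt_sin x).const_mul a).add
        ((Real.hasDerivAt_cos x).const_mul b)).const_mul (Real.cos y)).add_const
        (h * Real.sin y)
    convert this using 1
    all_goals first | rfl | ring
  have huy : ∀ x y : ℝ, HasDerivAt (fun t => u x t)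
      (-Real.sin y * (a * Real.sin x + b * Real.cos x) + h * Real.cos y) y := by
    intro x y
    have := (((Real.hasDerivAt_cos y).mul_const (a * Real.sin x + b * Real.cos x)).add
        ((Real.hasDerivAt_sin y).const_mul h))
    convert this using 1
    all_goals first | rfl | ring
  have hΦx : ∀ x y : ℝ, HasDerivAt (fun s => Φ s y)
      (deriv f (u x y) * (Real.cos y * (a * Real.cos x - b * Real.sin x))) x := by
    intro x y
    have h1 : (fun s => Φ s y) = fun s => f (u s y) := funext fun s => hΦ s y
    rw [h1]
    exact ((hf1 (u x y)).hasDerivAt).comp x (hux x y)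
  have hΦy : ∀ x y : ℝ, HasDerivAt (fun t => Φ x t)
      (deriv f (u x y) * (-Real.sin y * (a * Real.sin x + b * Real.cos x) + h * Real.cos y)) y := by
    intro x y
    have h1 : (fun t => Φ x t) = fun t => f (u x t) := funext fun t => hΦ x t
    rw [h1]
    exact ((hf1 (u x y)).hasDerivAt).comp y (huy x y)
  have hpdx : ∀ x y : ℝ, pdx Φ x y
      = deriv f (u x y) * (Real.cos y * (a * Real.cos x - b * Real.sin x)) := by
    intro x y; exact (hΦx x y).deriv
  have hpdy : ∀ x y : ℝ, pdy Φ x y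
      = deriv f (u x y) * (-Real.sin y * (a * Real.sin x + b * Real.cos x) + h * Real.cos y) := by
    intro x y; exact (hΦy x y).deriv
  have hFx : ∀ x y : ℝ, HasDerivAt (fun s => deriv f (u s y))
      (deriv (deriv f) (u x y) * (Real.cos y * (a * Real.cos x - b * Real.sin x))) x := by
    intro x y
    exact ((hf2 (u x y)).hasDerivAt).comp x (hux x y)
  have hFy : ∀ x y : ℝ, HasDerivAt (fun t => deriv f (u x t))
      (deriv (deriv f) (u x y) *
        (-Real.sin y * (a * Real.sin x + b * Real.cos x) + h * Real.cos y)) y := by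
    intro x y
    exact ((hf2 (u x y)).hasDerivAt).comp y (huy x y)
  have hXx : ∀ x y : ℝ, HasDerivAt (fun s => Real.cos y * (a * Real.cos s - b * Real.sin s))
      (Real.cos y * (-(a * Real.sin x) - b * Real.cos x)) x := by
    intro x y
    have := (((Real.hasDerivAt_cos x).const_mul a).sub
        ((Real.hasDerivAt_sin x).const_mul b)).const_mul (Real.cos y)
    convert this using 1
    all_goals first | rfl | ring
  have hYx : ∀ x y : ℝ, HasDerivAt
      (fun s => -Real.sin y * (a * Real.sin s + b * Real.cos s) + h * Real.cos y)
      (-Real.sin y * (a * Real.cos x - b * Real.sin x)) x := by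
    intro x y
    have := ((((Real.hasDerivAt_sin x).const_mul a).add
        ((Real.hasDerivAt_cos x).const_mul b)).const_mul (-Real.sin y)).add_const
        (h * Real.cos y)
    convert this using 1
    all_goals first | rfl | ring
  have hYy : ∀ x y : ℝ, HasDerivAt
      (fun t => -Real.sin t * (a * Real.sin x + b * Real.cos x) + h * Real.cos t)
      (-Real.cos y * (a * Real.sin x + b * Real.cos x) - h * Real.sin y) y := by
    intro x y
    have := (((Real.hasDerivAt_sin y).neg.mul_const (a * Real.sin x + b * Real.cos x)).add
        ((Real.hasDerivAt_cos y).const_mul h))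
    convert this using 1
    all_goals first | rfl | ring
  have hpxx : pdx (fun x y => pdx Φ x y) l p
      = deriv (deriv f) (u l p) * (Real.cos p * (a * Real.cos l - b * Real.sin l)) *
          (Real.cos p * (a * Real.cos l - b * Real.sin l))
        + deriv f (u l p) * (Real.cos p * (-(a * Real.sin l) - b * Real.cos l)) := by
    have h1 : (fun s => pdx Φ s p)
        = fun s => deriv f (u s p) * (Real.cos p * (a * Real.cos s - b * Real.sin s)) :=
      funext fun s => hpdx s p
    show deriv (fun s => pdx Φ s p) l = _
    rw [h1]
    exact ((hFx l p).mul (hXx l p)).deriv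
  have hpxy : pdx (fun x y => pdy Φ x y) l p
      = deriv (deriv f) (u l p) * (Real.cos p * (a * Real.cos l - b * Real.sin l)) *
          (-Real.sin p * (a * Real.sin l + b * Real.cos l) + h * Real.cos p)
        + deriv f (u l p) * (-Real.sin p * (a * Real.cos l - b * Real.sin l)) := by
    have h1 : (fun s => pdy Φ s p)
        = fun s => deriv f (u s p) *
            (-Real.sin p * (a * Real.sin s + b * Real.cos s) + h * Real.cos p) :=
      funext fun s => hpdy s p
    show deriv (fun s => pdy Φ s p) l = _
    rw [h1]
    exact ((hFx l p).mul (hYx l p)).deriv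
  have hpyy : pdy (fun x y => pdy Φ x y) l p
      = deriv (deriv f) (u l p) *
          (-Real.sin p * (a * Real.sin l + b * Real.cos l) + h * Real.cos p) *
          (-Real.sin p * (a * Real.sin l + b * Real.cos l) + h * Real.cos p)
        + deriv f (u l p) *
          (-Real.cos p * (a * Real.sin l + b * Real.cos l) - h * Real.sin p) := by
    have h1 : (fun t => pdy Φ l t)
        = fun t => deriv f (u l t) *
            (-Real.sin t * (a * Real.sin l + b * Real.cos l) + h * Real.cos t) :=
      funext fun t => hpdy l t
    show deriv (fun t => pdy Φ l t) p = _
    rw [h1]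
    exact ((hFy l p).mul (hYy l p)).deriv
  rw [hpxy, hpxx, hpyy, hpdx l p, hpdy l p]
  have hc2 : Real.cos p ^ 2 ≠ 0 := pow_ne_zero _ hc
  have hc3 : Real.cos p ^ 3 ≠ 0 := pow_ne_zero _ hc
  field_simp
  linear_combination (deriv f (u l p))^3 * (a * Real.cos l - b * Real.sin l) *
      (-Real.sin p * (a * Real.sin l + b * Real.cos l) + h * Real.cos p) *
      (a * Real.sin l + b * Real.cos l) * (Real.sin_sq_add_cos_sq p)
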